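/- Let n ≥ 5 be an integer and let t ∈ (0, cos(2π/n)) satisfy T_n′′′(t) = 0. Then φ_n(t) := T_n(t) + t + 1 − ((2t+1)/n²)·T_n′(t) > 0. In fact, φ_n(t) = (t+1)·(1 + ((n²−1−(n²−4)t)/(n²−1−(n²+2)t²))·T_n(t)), the denominator n²−1−(n²+2)t² is positive, and φ_n(t) ≥ (t+1)·t·(n²−4−(n²+2)t)/(n²−1−(n²+2)t²) > 0. -/

import Mathlib

open Polynomial Real

/-- The `n`-th Chebyshev polynomial of the first kind, as a real polynomial. -/
noncomputable def chebT (n : ℕ) : Polynomial ℝ := Polynomial.Chebyshev.T ℝ (n : ℤ)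

/-- `φ_n(x) = T_n(x) + x + 1 - ((2x+1)/n²) T_n'(x)`. -/
noncomputable def φ (n : ℕ) (x : ℝ) : ℝ :=
  (chebT n).eval x + x + 1 - (2 * x + 1) / (n : ℝ) ^ 2 * (derivative (chebT n)).eval x

lemma cheb_ode (n : ℤ) : (1 - X^2 : ℝ[X]) * derivative (derivative (Chebyshev.T ℝ n)) =
    X * derivative (Chebyshev.T ℝ n) - (n : ℝ[X])^2 * Chebyshev.T ℝ n := by
  have h1 := Polynomial.Chebyshev.add_one_mul_T_eq_poly_in_U (R := ℝ) (n - 1)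
  simp only [sub_add_cancel] at h1
  have h2 := Polynomial.Chebyshev.T_derivative_eq_U (R := ℝ) n
  have h2' := congrArg derivative h2
  simp only [derivative_mul, derivative_intCast, zero_mul, zero_add] at h2'
  linear_combination (norm := (push_cast; ring1)) (1 - X^2 : ℝ[X]) * h2' - (X : ℝ[X]) * h2 + (n : ℝ[X]) * h1

lemma cheb_ode3 (n : ℤ) : (1 - X^2 : ℝ[X]) * derivative (derivative (derivative (Chebyshev.T ℝ n))) =
    3 * X * derivative (derivative (Chebyshev.T ℝ n)) + (1 - (n : ℝ[X])^2) * derivative (Chebyshev.T ℝ n) := by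
  have h := congrArg derivative (cheb_ode n)
  simp only [derivative_mul, derivative_sub, derivative_one, derivative_X, derivative_X_pow,
    derivative_intCast, derivative_pow, Nat.cast_ofNat, map_ofNat, pow_one, zero_mul, zero_add, zero_sub, mul_zero] at h
  linear_combination (norm := (push_cast; ring1)) h

set_option maxHeartbeats 1600000 in
/-- If `n ≥ 5` and `t ∈ (0, cos(2π/n))` is a zero of `T_n'''`, then `φ_n(t) > 0`;
in fact `φ_n(t) = (t+1)(1 + ((n²-1-(n²-4)t)/(n²-1-(n²+2)t²)) T_n(t))`, the
denominator `n²-1-(n²+2)t²` is positive, and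
`φ_n(t) ≥ (t+1) t (n²-4-(n²+2)t)/(n²-1-(n²+2)t²) > 0`. -/
theorem phi_positive_at_critical_points (n : ℕ) (hn : 5 ≤ n) (t : ℝ)
    (ht : t ∈ Set.Ioo (0 : ℝ) (Real.cos (2 * π / n)))
    (h3 : (derivative (derivative (derivative (chebT n)))).eval t = 0) :
    0 < φ n t ∧
    φ n t = (t + 1) * (1 + ((n : ℝ) ^ 2 - 1 - ((n : ℝ) ^ 2 - 4) * t)
        / ((n : ℝ) ^ 2 - 1 - ((n : ℝ) ^ 2 + 2) * t ^ 2) * (chebT n).eval t) ∧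
    0 < (n : ℝ) ^ 2 - 1 - ((n : ℝ) ^ 2 + 2) * t ^ 2 ∧
    (t + 1) * t * ((n : ℝ) ^ 2 - 4 - ((n : ℝ) ^ 2 + 2) * t)
        / ((n : ℝ) ^ 2 - 1 - ((n : ℝ) ^ 2 + 2) * t ^ 2) ≤ φ n t ∧
    0 < (t + 1) * t * ((n : ℝ) ^ 2 - 4 - ((n : ℝ) ^ 2 + 2) * t)
        / ((n : ℝ) ^ 2 - 1 - ((n : ℝ) ^ 2 + 2) * t ^ 2) := by
  obtain ⟨ht0, htc⟩ := ht
  have hn5 : (5 : ℝ) ≤ (n : ℝ) := by exact_mod_cast hn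
  set N : ℝ := (n : ℝ) ^ 2 with hNdef
  have hN : (25 : ℝ) ≤ N := by nlinarith
  have hNpos : (0 : ℝ) < N := by linarith
  set A : ℝ := (chebT n).eval t with hA
  set B : ℝ := (derivative (chebT n)).eval t with hB
  set C : ℝ := (derivative (derivative (chebT n))).eval t with hC
  -- evaluated ODEs
  have e1 : (1 - t ^ 2) * C = t * B - N * A := by
    have := congrArg (Polynomial.eval t) (cheb_ode (n : ℤ))
    simpa [chebT, hNdef, hA, hB, hC] using this
  have e2 : (0 : ℝ) = 3 * t * C + (1 - N) * B := by
    have := congrArg (Polynomial.eval t) (cheb_ode3 (n : ℤ))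
    rw [show (derivative (derivative (derivative (Chebyshev.T ℝ (n:ℤ))))) =
        (derivative (derivative (derivative (chebT n)))) from rfl] at this
    simp only [eval_mul, eval_sub, eval_add, eval_one, eval_pow, eval_X, eval_ofNat,
      eval_intCast, h3, mul_zero] at this
    rw [show Chebyshev.T ℝ ((n:ℕ):ℤ) = chebT n from rfl] at this
    push_cast at this
    rw [← hB, ← hC, ← hNdef] at this
    exact this
  -- key relation  B * D = -3 t N A
  have hBD : B * (N - 1 - (N + 2) * t ^ 2) = -3 * t * N * A := by
    linear_combination 3 * t * e1 + (1 - t ^ 2) * e2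
  -- numeric bounds on t
  have hπn2 : π / (n : ℝ) ≤ π / 2 := by
    gcongr
    all_goals linarith [pi_pos]
  have hsin : (2 : ℝ) / n ≤ sin (π / n) := by
    have h := Real.mul_le_sin (x := π / n) (by positivity) hπn2
    have : 2 / π * (π / n) = 2 / n := by
      field_simp
    linarith [this ▸ h]
  have hcos : cos (2 * π / n) ≤ 1 - 8 / N := by
    have h2 : 2 * π / (n : ℝ) = 2 * (π / n) := by ring
    rw [h2, Real.cos_two_mul']
    have hs : (2 / (n:ℝ)) ^ 2 ≤ sin (π / n) ^ 2 := by
      have h0 : (0:ℝ) ≤ 2 / n := by positivity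
      nlinarith [hsin]
    have h4 : (2 / (n:ℝ)) ^ 2 = 4 / N := by
      rw [hNdef]; field_simp; ring
    have hs' : 4 / N ≤ sin (π / (n:ℝ)) ^ 2 := h4 ▸ hs
    have h8 : (8:ℝ) / N = 2 * (4 / N) := by ring
    linarith [hs', Real.sin_sq_add_cos_sq (π / (n:ℝ)), h8]
  have htN : t * N < N - 8 := by
    have h1 : t < 1 - 8 / N := lt_of_lt_of_le htc hcos
    have h2 : (1 - 8 / N) * N = N - 8 := by field_simp
    have h3 := mul_lt_mul_of_pos_right h1 hNpos
    linarith [h3, h2]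
  have ht1 : t < 1 := by
    by_contra hcon
    push_neg at hcon
    have := mul_le_mul_of_nonneg_right hcon hNpos.le
    linarith [htN, this]
  -- |A| ≤ 1
  have hAcos : A = cos ((n : ℝ) * arccos t) := by
    have h := Polynomial.Chebyshev.T_real_cos (arccos t) ((n : ℕ) : ℤ)
    rw [Real.cos_arccos (by linarith) (by linarith)] at h
    rw [hA, show chebT n = Chebyshev.T ℝ ((n:ℕ):ℤ) from rfl, h]
    push_cast
    ring_nf
  have hAge : -1 ≤ A := by rw [hAcos]; exact neg_one_le_cos _
  have hAle : A ≤ 1 := by rw [hAcos]; exact cos_le_one _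
  -- denominator positive
  have hsq : (t * N) ^ 2 < (N - 8) ^ 2 :=
    sq_lt_sq' (by nlinarith [mul_pos ht0 hNpos]) htN
  have hN2 : (0:ℝ) < N + 2 := by linarith
  have key : (N + 2) * (t * N) ^ 2 ≤ (N + 2) * (N - 8) ^ 2 :=
    mul_le_mul_of_nonneg_left hsq.le hN2.le
  have hq : 0 ≤ (N - 25) * N := mul_nonneg (by linarith) hNpos.le
  have hD' : 0 < N ^ 2 * (N - 1 - (N + 2) * t ^ 2) := by linarith [key, hq, hN]
  have hD : 0 < N - 1 - (N + 2) * t ^ 2 :=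
    (mul_pos_iff.mp hD').elim (fun h => h.2) (fun h => absurd h.1 (not_lt.mpr (sq_nonneg N)))
  -- the formula
  have hn2 : N ≠ 0 := ne_of_gt hNpos
  have hDne : N - 1 - (N + 2) * t ^ 2 ≠ 0 := ne_of_gt hD
  have hφ : φ n t = (t + 1) * (1 + (N - 1 - (N - 4) * t) / (N - 1 - (N + 2) * t ^ 2) * A) := by
    unfold φ
    rw [← hA, ← hB, ← hNdef]
    rw [div_mul_eq_mul_div, div_mul_eq_mul_div, one_add_div hDne, mul_div_assoc', sub_eq_iff_eq_add, div_add_div _ _ hDne hn2, eq_div_iff (mul_ne_zero hDne hn2)]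
    linear_combination (-(2 * t + 1)) * hBD
  -- lower bound
  have hKpos : 0 ≤ N - 1 - (N - 4) * t := by
    have := mul_nonneg (by linarith : (0:ℝ) ≤ N - 4) (by linarith : (0:ℝ) ≤ 1 - t)
    nlinarith [this]
  have hnum : 0 < N - 4 - (N + 2) * t := by nlinarith [htN, ht0, ht1]
  have elow : 1 - (N - 1 - (N - 4) * t) / (N - 1 - (N + 2) * t ^ 2)
      = t * (N - 4 - (N + 2) * t) / (N - 1 - (N + 2) * t ^ 2) := by
    rw [one_sub_div hDne]
    ring
  have hmul : (N - 1 - (N - 4) * t) / (N - 1 - (N + 2) * t ^ 2) * (-1)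
      ≤ (N - 1 - (N - 4) * t) / (N - 1 - (N + 2) * t ^ 2) * A :=
    mul_le_mul_of_nonneg_left hAge (div_nonneg hKpos hD.le)
  have h1 : t * (N - 4 - (N + 2) * t) / (N - 1 - (N + 2) * t ^ 2)
      ≤ 1 + (N - 1 - (N - 4) * t) / (N - 1 - (N + 2) * t ^ 2) * A := by
    linarith [hmul, elow]
  have hLB : (t + 1) * t * (N - 4 - (N + 2) * t) / (N - 1 - (N + 2) * t ^ 2)
      = (t + 1) * (t * (N - 4 - (N + 2) * t) / (N - 1 - (N + 2) * t ^ 2)) := by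
    ring
  have conj4 : (t + 1) * t * (N - 4 - (N + 2) * t) / (N - 1 - (N + 2) * t ^ 2) ≤ φ n t := by
    rw [hφ, hLB]
    exact mul_le_mul_of_nonneg_left h1 (by linarith)
  have conj5 : 0 < (t + 1) * t * (N - 4 - (N + 2) * t) / (N - 1 - (N + 2) * t ^ 2) :=
    div_pos (mul_pos (mul_pos (by linarith) ht0) hnum) hD
  exact ⟨lt_of_lt_of_le conj5 conj4, hφ, hD, conj4, conj5⟩
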